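/- arXiv:1901.09522 — 2 statements merged into one kernel-verified Lean document; each statement's English description precedes it below -/
import Mathlib

section
/- Let X be a real normed space and J : X → ℝ a locally Lipschitz function. Then the relaxed monotonicity condition ⟨ξ−η, u−v⟩ ≥ −m‖u−v‖² for all u,v ∈ X, ξ ∈ ∂J(u), η ∈ ∂J(v) (where ∂J is the Clarke subdifferential and m ≥ 0) holds if and only if J⁰(u; v−u) + J⁰(v; u−v) ≤ m‖u−v‖² for all u,v ∈ X, where J⁰ denotes the Clarke generalized directional derivative. -/
/-- The Clarke generalized directional derivative
`J⁰(u;v) = limsup_{w→u, λ→0⁺} (J(w+λv)−J(w))/λ`. -/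
noncomputable def clarkeDeriv {X : Type*} [NormedAddCommGroup X] [NormedSpace ℝ X]
    (J : X → ℝ) (u v : X) : ℝ :=
  Filter.limsup (fun p : X × ℝ => (J (p.1 + p.2 • v) - J p.1) / p.2)
    ((nhds u) ×ˢ (nhdsWithin (0 : ℝ) (Set.Ioi 0)))

/-- The Clarke subdifferential `∂J(u) = {ξ ∈ X* : ⟨ξ,v⟩ ≤ J⁰(u;v) for all v}`. -/
def clarkeSubdiff {X : Type*} [NormedAddCommGroup X] [NormedSpace ℝ X]
    (J : X → ℝ) (u : X) : Set (X →L[ℝ] ℝ) :=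
  {ξ | ∀ v : X, ξ v ≤ clarkeDeriv J u v}

open Filter Set Topology

namespace ClarkeAux

variable {X : Type*} [NormedAddCommGroup X] [NormedSpace ℝ X]

noncomputable def Fl (u : X) : Filter (X × ℝ) := (nhds u) ×ˢ (nhdsWithin (0 : ℝ) (Set.Ioi 0))

noncomputable def Q (J : X → ℝ) (v : X) (p : X × ℝ) : ℝ := (J (p.1 + p.2 • v) - J p.1) / p.2

lemma deriv_eq (J : X → ℝ) (u v : X) : clarkeDeriv J u v = limsup (Q J v) (Fl u) := rfl

instance (u : X) : (Fl u).NeBot := by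
  unfold Fl; infer_instance

lemma tendsto_snd' (u : X) : Tendsto (fun p : X × ℝ => p.2) (Fl u) (nhdsWithin (0:ℝ) (Ioi 0)) :=
  tendsto_snd

lemma tendsto_add_smul (u a : X) :
    Tendsto (fun p : X × ℝ => p.1 + p.2 • a) (Fl u) (nhds u) := by
  have h1 : Tendsto (fun p : X × ℝ => p.1) (Fl u) (nhds u) := tendsto_fst
  have h2 : Tendsto (fun p : X × ℝ => p.2) (Fl u) (nhds (0:ℝ)) :=
    (tendsto_snd' u).mono_right nhdsWithin_le_nhds
  have := h1.add (h2.smul_const a)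
  simpa using this

lemma tendsto_shift (u a : X) :
    Tendsto (fun p : X × ℝ => (p.1 + p.2 • a, p.2)) (Fl u) (Fl u) :=
  (tendsto_add_smul u a).prodMk (tendsto_snd' u)

lemma tendsto_scale (u : X) {t : ℝ} (ht : 0 < t) :
    Tendsto (fun p : X × ℝ => (p.1, t * p.2)) (Fl u) (Fl u) := by
  refine Tendsto.prodMk tendsto_fst ?_
  rw [tendsto_nhdsWithin_iff]
  constructor
  · have h2 : Tendsto (fun p : X × ℝ => p.2) (Fl u) (nhds (0:ℝ)) :=
      (tendsto_snd' u).mono_right nhdsWithin_le_nhds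
    simpa using h2.const_mul t
  · filter_upwards [(tendsto_snd' u).eventually (eventually_mem_nhdsWithin)] with p hp
    exact mul_pos ht hp

lemma ev_pos (u : X) : ∀ᶠ p : X × ℝ in Fl u, 0 < p.2 :=
  (tendsto_snd' u).eventually (eventually_mem_nhdsWithin)

/-- The uniform Lipschitz bound near `u`. -/
lemma exists_bound (J : X → ℝ) (hJ : LocallyLipschitz J) (u : X) :
    ∃ K : ℝ, 0 ≤ K ∧ ∀ x : X, ∀ᶠ p in Fl u, |Q J x p| ≤ K * ‖x‖ := by
  obtain ⟨K, t, ht, hK⟩ := hJ u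
  refine ⟨K, K.coe_nonneg, fun x => ?_⟩
  have h1 : ∀ᶠ p : X × ℝ in Fl u, p.1 ∈ t :=
    tendsto_fst.eventually (eventually_of_mem ht fun y hy => hy)
  have h2 : ∀ᶠ p : X × ℝ in Fl u, p.1 + p.2 • x ∈ t :=
    (tendsto_add_smul u x).eventually (eventually_of_mem ht fun y hy => hy)
  filter_upwards [h1, h2, ev_pos u] with p hp1 hp2 hp3
  have hd := hK.dist_le_mul _ hp2 _ hp1
  rw [Real.dist_eq] at hd
  have hdist : dist (p.1 + p.2 • x) p.1 = p.2 * ‖x‖ := by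
    rw [dist_eq_norm]
    simp [norm_smul, abs_of_pos hp3]
  rw [hdist] at hd
  have : |Q J x p| = |J (p.1 + p.2 • x) - J p.1| / p.2 := by
    rw [Q, abs_div, abs_of_pos hp3]
  rw [this, div_le_iff₀ hp3]
  calc |J (p.1 + p.2 • x) - J p.1| ≤ K * (p.2 * ‖x‖) := hd
    _ = K * ‖x‖ * p.2 := by ring

section
variable {J : X → ℝ} (hJ : LocallyLipschitz J)

include hJ

lemma isBounded (u x : X) : IsBoundedUnder (· ≤ ·) (Fl u) (Q J x) := by
  obtain ⟨K, _, hK⟩ := exists_bound J hJ u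
  exact ⟨K * ‖x‖, eventually_map.2 <| (hK x).mono fun p hp => (abs_le.1 hp).2⟩

lemma isCobounded (u x : X) : IsCoboundedUnder (· ≤ ·) (Fl u) (Q J x) := by
  obtain ⟨K, _, hK⟩ := exists_bound J hJ u
  exact isCoboundedUnder_le_of_eventually_le (Fl u) (x := -(K * ‖x‖))
    ((hK x).mono fun p hp => (abs_le.1 hp).1)

lemma deriv_le_bound (u : X) : ∃ K : ℝ, 0 ≤ K ∧ ∀ x : X, clarkeDeriv J u x ≤ K * ‖x‖ := by
  obtain ⟨K, hK0, hK⟩ := exists_bound J hJ u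
  refine ⟨K, hK0, fun x => ?_⟩
  rw [deriv_eq]
  exact limsup_le_of_le (isCobounded hJ u x) ((hK x).mono fun p hp => (abs_le.1 hp).2)

lemma deriv_zero (u : X) : clarkeDeriv J u 0 = 0 := by
  rw [deriv_eq]
  have : Q J (0 : X) = fun _ => (0 : ℝ) := by
    funext p; simp [Q]
  rw [this, limsup_const]

lemma deriv_add_le (u a b : X) :
    clarkeDeriv J u (a + b) ≤ clarkeDeriv J u a + clarkeDeriv J u b := by
  refine le_of_forall_pos_le_add fun ε hε => ?_
  have ha : ∀ᶠ p in Fl u, Q J a p < clarkeDeriv J u a + ε / 2 :=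
    eventually_lt_of_limsup_lt (by rw [← deriv_eq]; linarith) (isBounded hJ u a)
  have hb0 : ∀ᶠ p in Fl u, Q J b p < clarkeDeriv J u b + ε / 2 :=
    eventually_lt_of_limsup_lt (by rw [← deriv_eq]; linarith) (isBounded hJ u b)
  have hb : ∀ᶠ p in Fl u, Q J b (p.1 + p.2 • a, p.2) < clarkeDeriv J u b + ε / 2 :=
    (tendsto_shift u a).eventually hb0
  have key : ∀ p : X × ℝ, Q J (a + b) p = Q J a p + Q J b (p.1 + p.2 • a, p.2) := by
    intro p
    simp only [Q, smul_add, ← add_assoc]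
    rw [← add_div, sub_add_sub_cancel']
  rw [deriv_eq]
  refine limsup_le_of_le ?_ ?_
  · obtain ⟨K, _, hK⟩ := exists_bound J hJ u
    exact isCoboundedUnder_le_of_eventually_le (Fl u) (x := -(K * ‖a + b‖))
      ((hK _).mono fun p hp => (abs_le.1 hp).1)
  · filter_upwards [ha, hb] with p hp1 hp2
    rw [key p]
    linarith

lemma deriv_smul_le (u x : X) {t : ℝ} (ht : 0 < t) :
    clarkeDeriv J u (t • x) ≤ t * clarkeDeriv J u x := by
  refine le_of_forall_pos_le_add fun ε hε => ?_
  have hε' : 0 < ε / t := div_pos hε ht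
  have hx : ∀ᶠ p in Fl u, Q J x p < clarkeDeriv J u x + ε / t :=
    eventually_lt_of_limsup_lt (by rw [← deriv_eq]; linarith) (isBounded hJ u x)
  have hx' : ∀ᶠ p in Fl u, Q J x (p.1, t * p.2) < clarkeDeriv J u x + ε / t :=
    (tendsto_scale u ht).eventually hx
  have key : ∀ p : X × ℝ, Q J (t • x) p = t * Q J x (p.1, t * p.2) := by
    intro p
    simp only [Q]
    rcases eq_or_ne p.2 0 with h | h
    · simp [h]
    · rw [smul_smul, mul_comm p.2 t]
      field_simp
  rw [deriv_eq]
  refine limsup_le_of_le ?_ ?_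
  · obtain ⟨K, _, hK⟩ := exists_bound J hJ u
    exact isCoboundedUnder_le_of_eventually_le (Fl u) (x := -(K * ‖t • x‖))
      ((hK _).mono fun p hp => (abs_le.1 hp).1)
  · filter_upwards [hx'] with p hp
    rw [key p]
    have := (mul_lt_mul_iff_right₀ ht).2 hp
    rw [mul_add, mul_div_cancel₀ _ ht.ne'] at this
    linarith

lemma deriv_smul (u x : X) {t : ℝ} (ht : 0 < t) :
    clarkeDeriv J u (t • x) = t * clarkeDeriv J u x := by
  refine le_antisymm (deriv_smul_le hJ u x ht) ?_
  have h := deriv_smul_le hJ u (t • x) (inv_pos.2 ht)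
  rw [smul_smul, inv_mul_cancel₀ ht.ne', one_smul] at h
  calc t * clarkeDeriv J u x ≤ t * (t⁻¹ * clarkeDeriv J u (t • x)) :=
        (mul_le_mul_iff_right₀ ht).2 h
    _ = clarkeDeriv J u (t • x) := by field_simp

lemma deriv_neg_add (u x : X) : 0 ≤ clarkeDeriv J u x + clarkeDeriv J u (-x) := by
  have := deriv_add_le hJ u x (-x)
  rw [add_neg_cancel, deriv_zero hJ] at this
  linarith

/-- Hahn–Banach: existence of a Clarke subgradient attaining the directional derivative. -/
lemma exists_subgradient (u w : X) (hw : w ≠ 0) :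
    ∃ ξ : X →L[ℝ] ℝ, ξ ∈ clarkeSubdiff J u ∧ ξ w = clarkeDeriv J u w := by
  set N : X → ℝ := clarkeDeriv J u with hN
  have N_hom : ∀ c : ℝ, 0 < c → ∀ x, N (c • x) = c * N x := fun c hc x => deriv_smul hJ u x hc
  have N_add : ∀ x y, N (x + y) ≤ N x + N y := fun x y => deriv_add_le hJ u x y
  have hfN : ∀ x : (LinearPMap.mkSpanSingleton (K := ℝ) (σ := RingHom.id ℝ) w (N w) hw).domain,
      (LinearPMap.mkSpanSingleton (K := ℝ) (σ := RingHom.id ℝ) w (N w) hw) x ≤ N x := by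
    rintro ⟨x, hx⟩
    rcases Submodule.mem_span_singleton.1 hx with ⟨c, rfl⟩
    rw [LinearPMap.mkSpanSingleton'_apply, RingHom.id_apply]
    rcases lt_trichotomy c 0 with hc | hc | hc
    · have h1 : N (c • w) = (-c) * N (-w) := by
        have : c • w = (-c) • (-w) := by simp
        rw [this, N_hom (-c) (by linarith) (-w)]
      rw [h1, smul_eq_mul]
      have := deriv_neg_add hJ u w
      nlinarith
    · simp [hc, hN, deriv_zero hJ]
    · rw [N_hom c hc w, smul_eq_mul]
  obtain ⟨g, hg1, hg2⟩ := exists_extension_of_le_sublinear (LinearPMap.mkSpanSingleton (K := ℝ) (σ := RingHom.id ℝ) w (N w) hw) N N_hom N_add hfN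
  obtain ⟨K, hK0, hK⟩ := deriv_le_bound hJ u
  have hgb : ∀ x : X, ‖g x‖ ≤ K * ‖x‖ := by
    intro x
    rw [Real.norm_eq_abs, abs_le]
    constructor
    · have := (hg2 (-x)).trans (hK (-x))
      rw [map_neg, norm_neg] at this
      linarith
    · exact (hg2 x).trans (hK x)
  refine ⟨g.mkContinuous K hgb, fun v => hg2 v, ?_⟩
  have hgw : g w = N w := by
    have := hg1 ⟨w, Submodule.mem_span_singleton_self w⟩
    rw [this, LinearPMap.mkSpanSingleton_apply]
  exact hgw

end

end ClarkeAux

/-- For a locally Lipschitz `J`, the relaxed monotonicity condition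
`⟨ξ−η, u−v⟩ ≥ −m‖u−v‖²` for all Clarke subgradients holds iff
`J⁰(u; v−u) + J⁰(v; u−v) ≤ m‖u−v‖²` for all `u, v`. -/
theorem relaxed_monotonicity_iff {X : Type*} [NormedAddCommGroup X] [NormedSpace ℝ X]
    (J : X → ℝ) (hJ : LocallyLipschitz J) (m : ℝ) (hm : 0 ≤ m) :
    (∀ u v : X, ∀ ξ ∈ clarkeSubdiff J u, ∀ η ∈ clarkeSubdiff J v,
        -(m * ‖u - v‖ ^ 2) ≤ (ξ - η) (u - v)) ↔
    (∀ u v : X, clarkeDeriv J u (v - u) + clarkeDeriv J v (u - v) ≤ m * ‖u - v‖ ^ 2) := by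
  constructor
  · intro h u v
    by_cases huv : u = v
    · subst huv
      simp [sub_self, ClarkeAux.deriv_zero hJ]
    · have hw1 : v - u ≠ 0 := sub_ne_zero.2 (Ne.symm huv)
      have hw2 : u - v ≠ 0 := sub_ne_zero.2 huv
      obtain ⟨ξ, hξ, hξw⟩ := ClarkeAux.exists_subgradient hJ u (v - u) hw1
      obtain ⟨η, hη, hηw⟩ := ClarkeAux.exists_subgradient hJ v (u - v) hw2
      have key := h u v ξ hξ η hη
      have e1 : (ξ - η) (u - v) = -ξ (v - u) - η (u - v) := by
        rw [ContinuousLinearMap.sub_apply, ← neg_sub v u, map_neg]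
      rw [e1, hξw, hηw] at key
      linarith
  · intro h u v ξ hξ η hη
    have h1 := hξ (v - u)
    have h2 := hη (u - v)
    have h3 := h u v
    have e1 : (ξ - η) (u - v) = -ξ (v - u) - η (u - v) := by
      rw [ContinuousLinearMap.sub_apply, ← neg_sub v u, map_neg]
    rw [e1]
    linarith
end

section
/- Let V be a Hilbert space with norm ‖·‖, and let A, B ∈ L(V,V*) with ⟨Av,v⟩ ≥ m_A‖v‖², ⟨Bv,v⟩ ≥ m_B‖v‖². Let M : V → X be a bounded linear map into a Banach space X, and let F : V → 2^{V*} satisfy ⟨ξ₁ − ξ₂, v₁ − v₂⟩ ≥ −m_J‖Mv₁ − Mv₂‖²_X for ξ_i ∈ F(v_i). Fix τ > 0 and a bounded linear operator K : V → V* with ‖K‖ ≤ c_E c_q τ. If m_B > m_J‖M‖² and τ < (m_B − m_J‖M‖²)/(c_E c_q), then the operator L(v) = Av + τBv + τKv + τM*F(Mv) is strictly monotone in the sense that any two solutions ū, ũ of L(v) ∋ g (for fixed g ∈ V*) coincide: (m_A + τ(m_B − m_J‖M‖² − τ c_E c_q))‖ū − ũ‖² ≤ 0 implies ū = ũ. 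-/
/-- Uniqueness for the discrete Rothe problem: under coercivity, the relaxed
monotonicity of the multivalued term, and the smallness conditions on `τ`, any
two solutions of `L(v) ∋ g` coincide. -/
theorem rothe_discrete_uniqueness {V X : Type*} [NormedAddCommGroup V]
    [InnerProductSpace ℝ V] [NormedAddCommGroup X] [NormedSpace ℝ X]
    (A B K : V →L[ℝ] V →L[ℝ] ℝ) (M : V →L[ℝ] X)
    (F : V → Set (V →L[ℝ] ℝ))
    (m_A m_B m_J c_E c_q τ : ℝ)
    (hmA : 0 < m_A) (hmB : 0 < m_B) (hmJ : 0 ≤ m_J)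
    (hcE : 0 < c_E) (hcq : 0 < c_q) (hτpos : 0 < τ)
    (hAcoer : ∀ v : V, m_A * ‖v‖ ^ 2 ≤ A v v)
    (hBcoer : ∀ v : V, m_B * ‖v‖ ^ 2 ≤ B v v)
    (hK : ∀ v : V, ‖K v‖ ≤ c_E * c_q * τ * ‖v‖)
    (hF : ∀ v₁ v₂ : V, ∀ ξ₁ ∈ F v₁, ∀ ξ₂ ∈ F v₂,
      -(m_J * ‖M v₁ - M v₂‖ ^ 2) ≤ (ξ₁ - ξ₂) (v₁ - v₂))
    (hsmall : m_J * ‖M‖ ^ 2 < m_B)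
    (hτ : τ < (m_B - m_J * ‖M‖ ^ 2) / (c_E * c_q))
    (g : V →L[ℝ] ℝ) (ub ut : V)
    (hub : ∃ ξ ∈ F ub, A ub + τ • B ub + τ • K ub + τ • ξ = g)
    (hut : ∃ ξ ∈ F ut, A ut + τ • B ut + τ • K ut + τ • ξ = g) :
    ub = ut := by
  obtain ⟨ξ₁, hξ₁, h1⟩ := hub
  obtain ⟨ξ₂, hξ₂, h2⟩ := hut
  have hne : A ub + τ • B ub + τ • K ub + τ • ξ₁
      = A ut + τ • B ut + τ • K ut + τ • ξ₂ := h1.trans h2.symm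
  have he : (A ub + τ • B ub + τ • K ub + τ • ξ₁) (ub - ut)
      = (A ut + τ • B ut + τ • K ut + τ • ξ₂) (ub - ut) := by rw [hne]
  simp only [ContinuousLinearMap.add_apply, ContinuousLinearMap.smul_apply,
    smul_eq_mul] at he
  have hAw : A (ub - ut) (ub - ut) = A ub (ub - ut) - A ut (ub - ut) := by
    simp only [map_sub, ContinuousLinearMap.sub_apply]; ring
  have hBw : B (ub - ut) (ub - ut) = B ub (ub - ut) - B ut (ub - ut) := by
    simp only [map_sub, ContinuousLinearMap.sub_apply]; ring
  have hKw : K (ub - ut) (ub - ut) = K ub (ub - ut) - K ut (ub - ut) := by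
    simp only [map_sub, ContinuousLinearMap.sub_apply]; ring
  have hξw : (ξ₁ - ξ₂) (ub - ut) = ξ₁ (ub - ut) - ξ₂ (ub - ut) :=
    ContinuousLinearMap.sub_apply _ _ _
  have key : A (ub - ut) (ub - ut) + τ * B (ub - ut) (ub - ut)
      + τ * K (ub - ut) (ub - ut) + τ * ((ξ₁ - ξ₂) (ub - ut)) = 0 := by
    rw [hAw, hBw, hKw, hξw]; linarith
  have hA := hAcoer (ub - ut)
  have hB := hBcoer (ub - ut)
  set n : ℝ := ‖ub - ut‖ with hn
  have hKb : -(c_E * c_q * τ * n * n) ≤ K (ub - ut) (ub - ut) := by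
    have h1' : |K (ub - ut) (ub - ut)| ≤ ‖K (ub - ut)‖ * n := by
      simpa using (K (ub - ut)).le_opNorm (ub - ut)
    have h2' : ‖K (ub - ut)‖ * n ≤ c_E * c_q * τ * n * n :=
      mul_le_mul_of_nonneg_right (hK (ub - ut)) (norm_nonneg _)
    have := neg_abs_le (K (ub - ut) (ub - ut))
    linarith
  have hMw : ‖M (ub - ut)‖ ≤ ‖M‖ * n := M.le_opNorm (ub - ut)
  have hFw := hF ub ut ξ₁ hξ₁ ξ₂ hξ₂
  rw [← map_sub] at hFw
  have hFb : -(m_J * (‖M‖ * n) ^ 2) ≤ (ξ₁ - ξ₂) (ub - ut) := by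
    have : m_J * ‖M (ub - ut)‖ ^ 2 ≤ m_J * (‖M‖ * n) ^ 2 := by
      apply mul_le_mul_of_nonneg_left _ hmJ
      exact pow_le_pow_left₀ (norm_nonneg _) hMw 2
    linarith
  have hτ' : c_E * c_q * τ < m_B - m_J * ‖M‖ ^ 2 := by
    have hcc : 0 < c_E * c_q := mul_pos hcE hcq
    rw [lt_div_iff₀ hcc] at hτ
    linarith [hτ]
  have hB' : τ * (m_B * n ^ 2) ≤ τ * B (ub - ut) (ub - ut) :=
    mul_le_mul_of_nonneg_left hB hτpos.le
  have hK' : τ * (-(c_E * c_q * τ * n * n)) ≤ τ * K (ub - ut) (ub - ut) :=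
    mul_le_mul_of_nonneg_left hKb hτpos.le
  have hF' : τ * (-(m_J * (‖M‖ * n) ^ 2)) ≤ τ * ((ξ₁ - ξ₂) (ub - ut)) :=
    mul_le_mul_of_nonneg_left hFb hτpos.le
  have hupper : m_A * n ^ 2
      ≤ τ * (c_E * c_q * τ * n * n) + τ * (m_J * (‖M‖ * n) ^ 2)
        - τ * (m_B * n ^ 2) := by linarith
  have hcpos : 0 < τ * (m_B - m_J * ‖M‖ ^ 2 - c_E * c_q * τ) :=
    mul_pos hτpos (by linarith)
  have heq : τ * (c_E * c_q * τ * n * n) + τ * (m_J * (‖M‖ * n) ^ 2)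
      - τ * (m_B * n ^ 2)
      = -(τ * (m_B - m_J * ‖M‖ ^ 2 - c_E * c_q * τ) * n ^ 2) := by ring
  rw [heq] at hupper
  have hsq : n ^ 2 ≤ 0 := by
    by_contra h
    push_neg at h
    have := mul_pos hcpos h
    have := mul_pos hmA h
    linarith
  have hn0 : n = 0 := by
    have := sq_nonneg n
    have h2 : n ^ 2 = 0 := le_antisymm hsq this
    exact pow_eq_zero_iff (by norm_num) |>.mp h2
  have : ub - ut = 0 := norm_eq_zero.mp hn0
  exact sub_eq_zero.mp this
end
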